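/- Let p(X) = (X − b)·(X − b) − s with s ≠ 0, and R the reflection defined by p. For m ∈ E with m ≠ b, setting α = s/((m−b)·(m−b)) (well-defined since E is anisotropic) and m' = b + α(m − b), the reflection R maps the zero circle at m to (1/α) times the zero circle at m'. Hence R acts on points of E \ {b} as the inversion m ↦ m' with (m' − b)·(m − b) = s and m' collinear with b and m. -/

import Mathlib

/-- For `p(X) = (X−b)·(X−b) − s` with `s ≠ 0` and `m ≠ b`, setting
`α = s/((m−b)·(m−b))` and `m' = b + α(m−b)`, the reflection `R` defined by `p` maps the
zero circle at `m` to `α⁻¹` times the zero circle at `m'`; hence `R` acts on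
`E \ {b}` as the inversion `m ↦ m'` with `(m'−b)·(m−b) = s` and `m'` collinear with
`b` and `m`. -/
theorem stmt_12 {k : Type*} [Field k] (hchar : (2 : k) ≠ 0)
    {E : Type*} [AddCommGroup E] [Module k E]
    (B : LinearMap.BilinForm k E) (hB : B.IsSymm)
    (haniso : ∀ x : E, B x x = 0 → x = 0)
    (cyc : (k × E × k) → (k × E × k) → k)
    (hcyc : ∀ p q : k × E × k,
      cyc p q = B p.2.1 q.2.1 - 2 * p.1 * q.2.2 - 2 * q.1 * p.2.2)
    (b m : E) (s : k) (hs : s ≠ 0) (hm : m ≠ b)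
    (p q q' : k × E × k)
    (hp : p = ((1 : k), -((2 : k) • b), B b b - s))
    (hq : q = ((1 : k), -((2 : k) • m), B m m))
    (α : k) (hα : α = s / B (m - b) (m - b))
    (m' : E) (hm' : m' = b + α • (m - b))
    (hq' : q' = ((1 : k), -((2 : k) • m'), B m' m')) :
    q - (2 * (cyc q p / cyc p p)) • p = α⁻¹ • q' ∧ B (m' - b) (m - b) = s := by
  have hd : B (m - b) (m - b) ≠ 0 := fun h => hm (sub_eq_zero.mp (haniso _ h))
  set d := B (m - b) (m - b) with hdd
  have hsym : B m b = B b m := hB.eq m b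
  have hmm : B m m = d - B b b + 2 * B b m := by
    simp only [hdd, map_sub, LinearMap.sub_apply, hsym]; ring
  have hcpp : cyc p p = 4 * s := by
    rw [hcyc, hp]
    simp only [map_neg, map_smul, LinearMap.neg_apply, LinearMap.smul_apply, smul_eq_mul]
    ring
  have hcqp : cyc q p = 2 * s - 2 * d := by
    rw [hcyc, hq, hp]
    simp only [map_neg, map_smul, LinearMap.neg_apply, LinearMap.smul_apply, smul_eq_mul]
    linear_combination 4 * hsym - 2 * hmm
  have hαinv : α⁻¹ = d / s := by rw [hα, inv_div]
  have hbmm' : B m' m' = B b b + 2 * α * (B b m - B b b) + α ^ 2 * d := by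
    rw [hm']
    simp only [map_add, map_smul, LinearMap.add_apply, LinearMap.smul_apply, smul_eq_mul,
      map_sub, LinearMap.sub_apply, hsym, hdd]
    ring
  have h4 : (4 : k) ≠ 0 := by
    have : (4 : k) = 2 * 2 := by norm_num
    rw [this]; exact mul_ne_zero hchar hchar
  constructor
  · rw [hcqp, hcpp, hαinv, hp, hq, hq']
    refine Prod.ext ?_ (Prod.ext ?_ ?_)
    · simp only [Prod.fst_sub, Prod.smul_fst, smul_eq_mul]
      field_simp
      ring
    · simp only [Prod.snd_sub, Prod.fst_sub, Prod.smul_snd, Prod.smul_fst, Prod.fst, Prod.snd]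
      rw [hm', hα]
      match_scalars <;> field_simp <;> ring
    · simp only [Prod.snd_sub, Prod.smul_snd, smul_eq_mul, Prod.snd]
      rw [hbmm', hmm, hα]
      field_simp
      ring
  · rw [hm']
    have : b + α • (m - b) - b = α • (m - b) := by abel
    rw [this]
    simp only [map_smul, LinearMap.smul_apply, smul_eq_mul, ← hdd]
    rw [hα, div_mul_cancel₀ _ hd]
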